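/- arXiv:2012.09972 — 4 statements merged into one kernel-verified Lean document; each statement's English description precedes it below -/
import Mathlib

section
/- Let G be a finite simple connected graph with monitors m1 and m2, let u and v be adjacent vertices of G with u ∉ {m1, m2} and v ≠ m1, and suppose every path in G from m1 to v passes through u (i.e., u separates m1 from v). Then the edge uv is unidentifiable: there exist two positive weight functions on the edges of G that assign equal metrics to every simple path from m1 to m2 but assign different weights to the edge uv. -/
open SimpleGraph

/-- Characteristic function of a proposition. -/
noncomputable def chiP (P : Prop) : ℝ := by classical exact if P then 1 else 0

lemma chiP_pos {P : Prop} (h : P) : chiP P = 1 := by simp [chiP, h]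
lemma chiP_neg {P : Prop} (h : ¬ P) : chiP P = 0 := by simp [chiP, h]
lemma chiP_nonneg (P : Prop) : 0 ≤ chiP P := by
  classical by_cases h : P <;> simp [chiP, h]
lemma chiP_le_one (P : Prop) : chiP P ≤ 1 := by
  classical by_cases h : P <;> simp [chiP, h]

/-- `x` is reachable from `v` by a walk avoiding `u`. -/
def InA {V : Type*} (G : SimpleGraph V) (u v x : V) : Prop :=
  ∃ w : G.Walk v x, u ∉ w.support

lemma InA_ne {V : Type*} {G : SimpleGraph V} {u v x : V} (h : InA G u v x) : x ≠ u := by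
  obtain ⟨w, hw⟩ := h
  intro he
  exact hw (he ▸ w.end_mem_support)

lemma InA_forward {V : Type*} {G : SimpleGraph V} {u v x y : V} (h : InA G u v x)
    (s : G.Walk x y) (hs : u ∉ s.support) : InA G u v y := by
  obtain ⟨w, hw⟩ := h
  refine ⟨w.append s, ?_⟩
  rw [SimpleGraph.Walk.support_append]
  intro hm
  rcases List.mem_append.1 hm with h1 | h2
  · exact hw h1
  · exact hs (List.mem_of_mem_tail h2)

lemma InA_back {V : Type*} {G : SimpleGraph V} {u v x y : V} (h : InA G u v y)
    (s : G.Walk x y) (hs : u ∉ s.support) : InA G u v x := by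
  refine InA_forward h s.reverse ?_
  rwa [SimpleGraph.Walk.support_reverse, List.mem_reverse]

/-- Indicator of edges from `u` into the set `A`. -/
noncomputable def dE {V : Type*} (G : SimpleGraph V) (u v : V) : Sym2 V → ℝ :=
  Sym2.lift ⟨fun x y => chiP (x = u) * chiP (InA G u v y) + chiP (y = u) * chiP (InA G u v x),
    by intro a b; ring⟩

/-- Indicator of edges from `u` out of the set `A`. -/
noncomputable def dF {V : Type*} (G : SimpleGraph V) (u v : V) : Sym2 V → ℝ :=
  Sym2.lift ⟨fun x y => chiP (x = u) * chiP (¬ InA G u v y ∧ y ≠ u)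
      + chiP (y = u) * chiP (¬ InA G u v x ∧ x ≠ u),
    by intro a b; ring⟩

lemma dE_mk {V : Type*} (G : SimpleGraph V) (u v x y : V) :
    dE G u v s(x, y) = chiP (x = u) * chiP (InA G u v y) + chiP (y = u) * chiP (InA G u v x) :=
  rfl

lemma dF_mk {V : Type*} (G : SimpleGraph V) (u v x y : V) :
    dF G u v s(x, y) = chiP (x = u) * chiP (¬ InA G u v y ∧ y ≠ u)
      + chiP (y = u) * chiP (¬ InA G u v x ∧ x ≠ u) :=
  rfl

lemma dE_nonneg {V : Type*} (G : SimpleGraph V) (u v : V) (e : Sym2 V) : 0 ≤ dE G u v e := by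
  induction e using Sym2.ind with
  | _ x y =>
    rw [dE_mk]
    have := chiP_nonneg (x = u); have := chiP_nonneg (y = u)
    have := chiP_nonneg (InA G u v y); have := chiP_nonneg (InA G u v x)
    positivity

lemma dE_le_two {V : Type*} (G : SimpleGraph V) (u v : V) (e : Sym2 V) : dE G u v e ≤ 2 := by
  induction e using Sym2.ind with
  | _ x y =>
    rw [dE_mk]
    have h1 := chiP_nonneg (x = u); have h2 := chiP_nonneg (y = u)
    have h3 := chiP_nonneg (InA G u v y); have h4 := chiP_nonneg (InA G u v x)
    have h5 := chiP_le_one (x = u); have h6 := chiP_le_one (y = u)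
    have h7 := chiP_le_one (InA G u v y); have h8 := chiP_le_one (InA G u v x)
    nlinarith

lemma dF_nonneg {V : Type*} (G : SimpleGraph V) (u v : V) (e : Sym2 V) : 0 ≤ dF G u v e := by
  induction e using Sym2.ind with
  | _ x y =>
    rw [dF_mk]
    have := chiP_nonneg (x = u); have := chiP_nonneg (y = u)
    have := chiP_nonneg (¬ InA G u v y ∧ y ≠ u); have := chiP_nonneg (¬ InA G u v x ∧ x ≠ u)
    positivity

lemma dF_le_two {V : Type*} (G : SimpleGraph V) (u v : V) (e : Sym2 V) : dF G u v e ≤ 2 := by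
  induction e using Sym2.ind with
  | _ x y =>
    rw [dF_mk]
    have h1 := chiP_nonneg (x = u); have h2 := chiP_nonneg (y = u)
    have h3 := chiP_nonneg (¬ InA G u v y ∧ y ≠ u); have h4 := chiP_nonneg (¬ InA G u v x ∧ x ≠ u)
    have h5 := chiP_le_one (x = u); have h6 := chiP_le_one (y = u)
    have h7 := chiP_le_one (¬ InA G u v y ∧ y ≠ u); have h8 := chiP_le_one (¬ InA G u v x ∧ x ≠ u)
    nlinarith

lemma dE_eq_zero_of_not_mem {V : Type*} (G : SimpleGraph V) (u v : V) {x y : V}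
    (hx : x ≠ u) (hy : y ≠ u) : dE G u v s(x, y) = 0 := by
  rw [dE_mk, chiP_neg hx, chiP_neg hy]; ring

lemma dF_eq_zero_of_not_mem {V : Type*} (G : SimpleGraph V) (u v : V) {x y : V}
    (hx : x ≠ u) (hy : y ≠ u) : dF G u v s(x, y) = 0 := by
  rw [dF_mk, chiP_neg hx, chiP_neg hy]; ring

lemma sum_map_one_add {α : Type*} (l : List α) (g : α → ℝ) :
    (l.map fun e => 1 + g e).sum = (l.map fun _ => (1:ℝ)).sum + (l.map g).sum := by
  induction l with
  | nil => simp
  | cons a t ih => simp [ih]; ring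

/-- If `u v` is an edge with `u` not a monitor, `v ≠ m1`, and `u`
separates `m1` from `v` (every simple path from `m1` to `v` passes through `u`),
then the edge `u v` is unidentifiable. -/
theorem separated_link_unidentifiable {V : Type*} [Fintype V]
    (G : SimpleGraph V) (hG : G.Connected)
    (m1 m2 : V) (hm : m1 ≠ m2)
    (u v : V) (hadj : G.Adj u v)
    (hu1 : u ≠ m1) (hu2 : u ≠ m2) (hv1 : v ≠ m1)
    (hsep : ∀ p : G.Walk m1 v, p.IsPath → u ∈ p.support) :
    ∃ w1 w2 : Sym2 V → ℝ,
      (∀ e ∈ G.edgeSet, 0 < w1 e) ∧ (∀ e ∈ G.edgeSet, 0 < w2 e) ∧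
      (∀ p : G.Walk m1 m2, p.IsPath →
        (p.edges.map w1).sum = (p.edges.map w2).sum) ∧
      w1 s(u, v) ≠ w2 s(u, v) := by
  classical
  -- v is in A
  have hvA : InA G u v v := ⟨SimpleGraph.Walk.nil, by simp [hadj.ne]⟩
  -- any walk from m1 to a point of A passes through u
  have key : ∀ a, InA G u v a → ∀ q : G.Walk m1 a, u ∈ q.support := by
    intro a ⟨w, hw⟩ q
    by_contra hq
    have hb := hsep (q.append w.reverse).bypass (q.append w.reverse).bypass_isPath
    have hsub := (q.append w.reverse).support_bypass_subset hb
    rw [SimpleGraph.Walk.support_append] at hsub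
    rcases List.mem_append.1 hsub with h1 | h2
    · exact hq h1
    · have : u ∈ w.reverse.support := List.mem_of_mem_tail h2
      rw [SimpleGraph.Walk.support_reverse, List.mem_reverse] at this
      exact hw this
  -- dE / dF values on the edge u v
  have hdEuv : dE G u v s(u, v) = 1 := by
    rw [dE_mk, chiP_pos rfl, chiP_pos hvA, chiP_neg (InA_ne hvA)]; ring
  have hdFuv : dF G u v s(u, v) = 0 := by
    rw [dF_mk, chiP_neg (InA_ne hvA)]
    have : ¬ (¬ InA G u v v ∧ v ≠ u) := fun h => h.1 hvA
    rw [chiP_neg this]; ring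
  by_cases hm2A : InA G u v m2
  · -- m2 reachable from v avoiding u
    refine ⟨fun _ => 1, fun e => 1 + (dF G u v e - dE G u v e) / 4, by intro e _; norm_num,
      ?_, ?_, ?_⟩
    · intro e _
      have h1 := dE_le_two G u v e
      have h2 := dF_nonneg G u v e
      linarith
    · intro p hp
      have hup : u ∈ p.support := key m2 hm2A p
      set q := p.takeUntil u hup with hqdef
      set r := p.dropUntil u hup with hrdef
      have hqr : q.append r = p := p.take_spec hup
      have hqp : q.IsPath := hp.takeUntil hup
      have hrp : r.IsPath := hp.dropUntil hup
      -- vertices of q other than u are not in A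
      have hqA : ∀ x ∈ q.support, x ≠ u → ¬ InA G u v x := by
        intro x hx hxu hxA
        have h2 := key x hxA (q.takeUntil x hx)
        have hnd2 : ((q.takeUntil x hx).support ++ (q.dropUntil x hx).support.tail).Nodup := by
          rw [← SimpleGraph.Walk.support_append, q.take_spec hx]
          exact hqp.support_nodup
        have hdisj := List.disjoint_of_nodup_append hnd2
        have hue : u ∈ (q.dropUntil x hx).support := SimpleGraph.Walk.end_mem_support _
        rw [SimpleGraph.Walk.support_eq_cons] at hue
        rcases List.mem_cons.1 hue with hue | hue
        · exact hxu hue.symm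
        · exact hdisj h2 hue
      -- vertices of r other than u are in A
      have hrA : ∀ x ∈ r.support, x ≠ u → InA G u v x := by
        intro x hx hxu
        have hnd2 : ((r.takeUntil x hx).support ++ (r.dropUntil x hx).support.tail).Nodup := by
          rw [← SimpleGraph.Walk.support_append, r.take_spec hx]
          exact hrp.support_nodup
        have hdisj := List.disjoint_of_nodup_append hnd2
        have hus : u ∉ (r.dropUntil x hx).support := by
          intro h
          rw [SimpleGraph.Walk.support_eq_cons] at h
          rcases List.mem_cons.1 h with h | h
          · exact hxu h.symm
          · exact hdisj (SimpleGraph.Walk.start_mem_support _) h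
        exact InA_back hm2A (r.dropUntil x hx) hus
      -- decompose r = cons (u,b) r'
      obtain ⟨b, hub, r', hr⟩ := SimpleGraph.Walk.exists_eq_cons_of_ne hu2 r
      -- decompose q.reverse = cons (u,c) q'
      obtain ⟨c, huc, q', hq⟩ := SimpleGraph.Walk.exists_eq_cons_of_ne hu1 q.reverse
      have hbA : InA G u v b := by
        refine hrA b ?_ hub.ne'
        rw [hr]; simp
      have hcnA : ¬ InA G u v c := by
        refine hqA c ?_ huc.ne'
        have : c ∈ q.reverse.support := by rw [hq]; simp
        rwa [SimpleGraph.Walk.support_reverse, List.mem_reverse] at this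
      have hur' : u ∉ r'.support := by
        have := hrp
        rw [hr, SimpleGraph.Walk.cons_isPath_iff] at this
        exact this.2
      have huq' : u ∉ q'.support := by
        have := hqp.reverse
        rw [hq, SimpleGraph.Walk.cons_isPath_iff] at this
        exact this.2
      -- the modifier function
      set g : Sym2 V → ℝ := fun e => (dF G u v e - dE G u v e) / 4 with hg
      have hzero : ∀ (a a' : V) (t : G.Walk a a'), u ∉ t.support →
          (t.edges.map g).sum = 0 := by
        intro a a' t ht
        refine List.sum_eq_zero ?_
        intro x hx
        obtain ⟨e, he, rfl⟩ := List.mem_map.1 hx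
        induction e using Sym2.ind with
        | _ x y =>
          have hxs : x ∈ t.support := t.fst_mem_support_of_mem_edges he
          have hys : y ∈ t.support := t.snd_mem_support_of_mem_edges he
          have hxu : x ≠ u := fun h => ht (h ▸ hxs)
          have hyu : y ≠ u := fun h => ht (h ▸ hys)
          rw [hg]
          simp only
          rw [dE_eq_zero_of_not_mem G u v hxu hyu, dF_eq_zero_of_not_mem G u v hxu hyu]
          norm_num
      have hgsum : (p.edges.map g).sum = 0 := by
        have hedges : p.edges = q.edges ++ r.edges := by
          rw [← hqr, SimpleGraph.Walk.edges_append]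
        have hqsum : (q.edges.map g).sum = g s(u, c) + (q'.edges.map g).sum := by
          have h1 : q.edges = q.reverse.edges.reverse := by
            rw [SimpleGraph.Walk.edges_reverse, List.reverse_reverse]
          rw [h1, hq]
          simp only [SimpleGraph.Walk.edges_cons, List.map_reverse, List.sum_reverse]
          simp [List.map_reverse]
        have hrsum : (r.edges.map g).sum = g s(u, b) + (r'.edges.map g).sum := by
          rw [hr]; simp
        rw [hedges, List.map_append, List.sum_append, hqsum, hrsum,
          hzero _ _ q' huq', hzero _ _ r' hur']
        have hgc : g s(u, c) = 1 / 4 := by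
          rw [hg]
          simp only
          have h1 : dE G u v s(u, c) = 0 := by
            rw [dE_mk, chiP_pos rfl, chiP_neg hcnA, chiP_neg huc.ne']
            ring
          have h2 : dF G u v s(u, c) = 1 := by
            rw [dF_mk, chiP_pos rfl, chiP_pos ⟨hcnA, huc.ne'⟩, chiP_neg huc.ne']
            ring
          rw [h1, h2]; norm_num
        have hgb : g s(u, b) = -(1 / 4) := by
          rw [hg]
          simp only
          have h1 : dE G u v s(u, b) = 1 := by
            rw [dE_mk, chiP_pos rfl, chiP_pos hbA, chiP_neg hub.ne']
            ring
          have h2 : dF G u v s(u, b) = 0 := by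
            rw [dF_mk, chiP_pos rfl, chiP_neg hub.ne']
            have : ¬ (¬ InA G u v b ∧ b ≠ u) := fun h => h.1 hbA
            rw [chiP_neg this]; ring
          rw [h1, h2]; norm_num
        rw [hgc, hgb]; ring
      rw [sum_map_one_add p.edges g, hgsum]
      simp
    · simp only [hdEuv, hdFuv]
      norm_num
  · -- m2 not reachable from v avoiding u : no m1-m2 path meets A at all
    refine ⟨fun _ => 1, fun e => 1 + dE G u v e / 2, by intro e _; norm_num, ?_, ?_, ?_⟩
    · intro e _
      have := dE_nonneg G u v e
      linarith
    · intro p hp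
      have hsupA : ∀ z ∈ p.support, ¬ InA G u v z := by
        intro z hz hzA
        have hu' := key z hzA (p.takeUntil z hz)
        have hnd2 : ((p.takeUntil z hz).support ++ (p.dropUntil z hz).support.tail).Nodup := by
          rw [← SimpleGraph.Walk.support_append, p.take_spec hz]
          exact hp.support_nodup
        have hdisj := List.disjoint_of_nodup_append hnd2
        have hus : u ∉ (p.dropUntil z hz).support := by
          intro h
          rw [SimpleGraph.Walk.support_eq_cons] at h
          rcases List.mem_cons.1 h with h | h
          · exact InA_ne hzA h.symm
          · exact hdisj hu' h
        exact hm2A (InA_forward hzA (p.dropUntil z hz) hus)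
      have : p.edges.map (fun e => 1 + dE G u v e / 2) = p.edges.map (fun _ => (1:ℝ)) := by
        refine List.map_congr_left ?_
        intro e he
        induction e using Sym2.ind with
        | _ x y =>
          have hxs : x ∈ p.support := p.fst_mem_support_of_mem_edges he
          have hys : y ∈ p.support := p.snd_mem_support_of_mem_edges he
          rw [dE_mk, chiP_neg (hsupA y hys), chiP_neg (hsupA x hxs)]
          ring
      rw [this]
    · simp only [hdEuv]
      norm_num
end

section
/- Let G be a finite simple connected graph with monitors m1 and m2, and let e = m1u be an edge of G incident to the monitor m1 whose other endpoint u is not m2. Then e is unidentifiable: there exist two positive weight functions on the edges of G that assign equal metrics to every simple path from m1 to m2 but assign different weights to e. -/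
open SimpleGraph
open scoped Classical

private lemma aux_zero {V : Type*} {G : SimpleGraph V} (a : V) {c d : V}
    (p : G.Walk c d) (ha : a ∉ p.support) (ε : ℝ) :
    (p.edges.map (fun e => if a ∈ e then ε else 0)).sum = 0 := by
  classical
  apply List.sum_eq_zero
  intro x hx
  simp only [List.mem_map] at hx
  obtain ⟨e, he, rfl⟩ := hx
  rw [if_neg]
  intro hae
  induction e with
  | h y z =>
    rcases Sym2.mem_iff.mp hae with rfl | rfl
    · exact ha (p.fst_mem_support_of_mem_edges he)
    · exact ha (p.snd_mem_support_of_mem_edges he)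

private lemma aux_one {V : Type*} {G : SimpleGraph V} {a b : V}
    (p : G.Walk a b) (hp : p.IsPath) (hab : a ≠ b) (ε : ℝ) :
    (p.edges.map (fun e => if a ∈ e then ε else 0)).sum = ε := by
  classical
  cases p with
  | nil => exact absurd rfl hab
  | cons h q =>
    rw [SimpleGraph.Walk.cons_isPath_iff] at hp
    simp only [SimpleGraph.Walk.edges_cons, List.map_cons, List.sum_cons]
    rw [aux_zero a q hp.2 ε, if_pos (Sym2.mem_mk_left _ _)]
    ring

private lemma sum_map_add {α : Type*} (l : List α) (f g : α → ℝ) :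
    (l.map (fun x => f x + g x)).sum = (l.map f).sum + (l.map g).sum := by
  induction l with
  | nil => simp
  | cons x xs ih => simp [ih]; ring

/-- Any edge `m1 u` incident to the monitor `m1` whose other endpoint
`u` is not the other monitor `m2` is unidentifiable. -/
theorem exterior_link_unidentifiable {V : Type*} [Fintype V]
    (G : SimpleGraph V) (hG : G.Connected)
    (m1 m2 : V) (hm : m1 ≠ m2)
    (u : V) (hadj : G.Adj m1 u) (hu : u ≠ m2) :
    ∃ w1 w2 : Sym2 V → ℝ,
      (∀ e ∈ G.edgeSet, 0 < w1 e) ∧ (∀ e ∈ G.edgeSet, 0 < w2 e) ∧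
      (∀ p : G.Walk m1 m2, p.IsPath →
        (p.edges.map w1).sum = (p.edges.map w2).sum) ∧
      w1 s(m1, u) ≠ w2 s(m1, u) := by
  classical
  refine ⟨fun _ => 1,
    fun e => 1 + ((if m1 ∈ e then (1:ℝ)/2 else 0) + (if m2 ∈ e then (-1:ℝ)/2 else 0)),
    fun e _ => one_pos, ?_, ?_, ?_⟩
  · intro e _
    dsimp only
    split_ifs <;> norm_num
  · intro p hp
    rw [sum_map_add, sum_map_add, aux_one p hp hm]
    have h2 : (p.edges.map (fun e => if m2 ∈ e then (-1:ℝ)/2 else 0)).sum = -1/2 := by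
      have := aux_one p.reverse hp.reverse hm.symm ((-1:ℝ)/2)
      rwa [SimpleGraph.Walk.edges_reverse, List.map_reverse, List.sum_reverse] at this
    rw [h2]
    norm_num
  · have h1 : m1 ∈ s(m1, u) := Sym2.mem_mk_left _ _
    have h2 : m2 ∉ s(m1, u) := by
      rw [Sym2.mem_iff]
      rintro (rfl | rfl)
      · exact hm rfl
      · exact hu rfl
    dsimp only
    rw [if_pos h1, if_neg h2]
    norm_num
end

section
/- Let G be a finite simple connected graph with monitors m1 and m2, let u be a vertex of G, and let C be the connected component of G − u containing m1, and suppose m2 ∈ C. Then every edge of G having an endpoint outside C ∪ {u} is unidentifiable: for such an edge e there exist two positive weight functions on the edges of G assigning equal metrics to every simple path from m1 to m2 but different weights to e. -/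
/-- The graph `G` with the vertex `u` deleted: all edges incident to `u` are
removed (so `u` becomes isolated, and reachability to any other vertex matches
reachability in the induced subgraph `G − u`). -/
def delVert {V : Type*} (G : SimpleGraph V) (u : V) : SimpleGraph V where
  Adj a b := G.Adj a b ∧ a ≠ u ∧ b ≠ u
  symm := by
    constructor
    intro a b h
    exact ⟨h.1.symm, h.2.2, h.2.1⟩
  loopless := by
    constructor
    intro a h
    exact G.loopless.irrefl a h.1

lemma reachable_delVert_of_walk {V : Type*} {G : SimpleGraph V} {u x y : V}
    (p : G.Walk x y) (hu : u ∉ p.support) : (delVert G u).Reachable x y := by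
  induction p with
  | nil => exact SimpleGraph.Reachable.refl _
  | cons h q ih =>
    simp only [SimpleGraph.Walk.support_cons, List.mem_cons, not_or] at hu
    have hadj : (delVert G u).Adj _ _ :=
      ⟨h, fun hh => hu.1 hh.symm, fun hh => hu.2 (hh ▸ q.start_mem_support)⟩
    exact hadj.reachable.trans (ih hu.2)

/-- If both monitors `m1`, `m2` lie in the connected component `C`
of `G − u` containing `m1`, then every edge of `G` with an endpoint outside
`C ∪ {u}` is unidentifiable. -/
theorem cut_off_link_unidentifiable {V : Type*} [Fintype V]
    (G : SimpleGraph V) (hG : G.Connected)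
    (u m1 m2 : V) (hm : m1 ≠ m2) (hm1 : m1 ≠ u) (hm2 : m2 ≠ u)
    (hC : (delVert G u).Reachable m2 m1)
    (a b : V) (hab : G.Adj a b)
    (ha_out : a ≠ u ∧ ¬ (delVert G u).Reachable a m1) :
    ∃ w1 w2 : Sym2 V → ℝ,
      (∀ e ∈ G.edgeSet, 0 < w1 e) ∧ (∀ e ∈ G.edgeSet, 0 < w2 e) ∧
      (∀ p : G.Walk m1 m2, p.IsPath →
        (p.edges.map w1).sum = (p.edges.map w2).sum) ∧
      w1 s(a, b) ≠ w2 s(a, b) := by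
  classical
  refine ⟨fun _ => 1, fun e => if e = s(a, b) then 2 else 1,
    fun e _ => one_pos, fun e _ => by positivity, ?_, ?_⟩
  · intro p hp
    -- the path never visits `a`
    have hav : a ∉ p.support := by
      intro hav
      have hq := p.support_takeUntil_subset hav
      have hr := p.support_dropUntil_subset hav
      have hu1 : u ∈ (p.takeUntil a hav).support := by
        by_contra h
        exact ha_out.2 ((reachable_delVert_of_walk _ h).symm)
      have hu2 : u ∈ (p.dropUntil a hav).support := by
        by_contra h
        exact ha_out.2 ((reachable_delVert_of_walk _ h).trans hC)
      have hspec := p.take_spec hav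
      have hnd : p.support.Nodup := hp.support_nodup
      rw [← hspec, SimpleGraph.Walk.support_append] at hnd
      have hu2' : u ∈ (p.dropUntil a hav).support.tail := by
        have hcons := (p.dropUntil a hav).support_eq_cons
        rw [hcons] at hu2 ⊢
        rcases List.mem_cons.mp hu2 with h' | h'
        · exact absurd h' (Ne.symm ha_out.1)
        · simpa using h'
      exact (List.disjoint_of_nodup_append hnd) hu1 hu2'
    have hne : ∀ e ∈ p.edges, ¬ e = s(a, b) := by
      intro e he heq
      exact hav (SimpleGraph.Walk.fst_mem_support_of_mem_edges p (heq ▸ he))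
    have : ∀ e ∈ p.edges, (if e = s(a, b) then (2:ℝ) else 1) = 1 := by
      intro e he; simp [hne e he]
    rw [List.map_congr_left this]
  · simp
end

section
/- Let G be a finite simple connected graph with monitors m1 and m2, and let v be a vertex of G with v ∉ {m1, m2} that has exactly two incident edges e1 and e2. Then e1 is unidentifiable: there exist two positive weight functions on the edges of G that assign equal metrics to every simple path from m1 to m2 but assign different weights to e1 (only the sum of the weights of e1 and e2 is determined). -/
open SimpleGraph

/-- If a non-monitor vertex `v` has exactly two incident edges
`e1` and `e2`, then `e1` is unidentifiable (only the sum of the weights of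
`e1` and `e2` is determined). -/
theorem degree_two_link_unidentifiable {V : Type*} [Fintype V]
    (G : SimpleGraph V) (hG : G.Connected)
    (m1 m2 : V) (hm : m1 ≠ m2)
    (v : V) (hv1 : v ≠ m1) (hv2 : v ≠ m2)
    (e1 e2 : Sym2 V) (he : e1 ≠ e2)
    (hinc : G.incidenceSet v = {e1, e2}) :
    ∃ w1 w2 : Sym2 V → ℝ,
      (∀ e ∈ G.edgeSet, 0 < w1 e) ∧ (∀ e ∈ G.edgeSet, 0 < w2 e) ∧
      (∀ p : G.Walk m1 m2, p.IsPath →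
        (p.edges.map w1).sum = (p.edges.map w2).sum) ∧
      w1 e1 ≠ w2 e1 := by
  classical
  have hve1 : v ∈ e1 := by
    have : e1 ∈ G.incidenceSet v := by rw [hinc]; simp
    exact this.2
  have hve2 : v ∈ e2 := by
    have : e2 ∈ G.incidenceSet v := by rw [hinc]; simp
    exact this.2
  -- key: any m1-m2 path containing v contains both e1 and e2
  have both : ∀ p : G.Walk m1 m2, p.IsPath → v ∈ p.support →
      e1 ∈ p.edges ∧ e2 ∈ p.edges := by
    intro p hp hvsup
    set q := p.takeUntil v hvsup with hq
    set r := p.dropUntil v hvsup with hr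
    have hspec : q.append r = p := p.take_spec hvsup
    have hedges : p.edges = q.edges ++ r.edges := by
      rw [← hspec, SimpleGraph.Walk.edges_append]
    -- first edge of r is incident to v
    obtain ⟨b, hb, fr, hfr⟩ : ∃ b, ∃ hb : G.Adj v b, ∃ fr : G.Walk b m2,
        r = SimpleGraph.Walk.cons hb fr := by
      cases r with
      | nil => exact absurd rfl hv2
      | cons h t => exact ⟨_, h, t, rfl⟩
    have hrE : s(v, b) ∈ r.edges := by rw [hfr]; simp
    -- last edge of q is incident to v; use q.reverse
    obtain ⟨c, hc, fq, hfq⟩ : ∃ c, ∃ hc : G.Adj v c, ∃ fq : G.Walk c m1,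
        q.reverse = SimpleGraph.Walk.cons hc fq := by
      cases hrev : q.reverse with
      | nil => exact absurd rfl hv1
      | cons h t => exact ⟨_, h, t, rfl⟩
    have hqE : s(v, c) ∈ q.edges := by
      have : s(v, c) ∈ q.reverse.edges := by rw [hfq]; simp
      rwa [SimpleGraph.Walk.edges_reverse, List.mem_reverse] at this
    -- both edges are in incidenceSet v
    have hq_mem : s(v, c) ∈ ({e1, e2} : Set (Sym2 V)) := by
      rw [← hinc]; exact ⟨G.mem_edgeSet.2 hc, by simp⟩
    have hr_mem : s(v, b) ∈ ({e1, e2} : Set (Sym2 V)) := by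
      rw [← hinc]; exact ⟨G.mem_edgeSet.2 hb, by simp⟩
    -- the two edges are distinct, since p.edges is nodup
    have hnd : p.edges.Nodup := hp.isTrail.edges_nodup
    have hdisj : List.Disjoint q.edges r.edges := by
      rw [hedges] at hnd
      exact List.disjoint_of_nodup_append hnd
    have hne : s(v, c) ≠ s(v, b) := by
      intro hcb
      exact hdisj hqE (hcb ▸ hrE)
    have hqp : s(v, c) ∈ p.edges := hedges ▸ (List.mem_append.2 (Or.inl hqE))
    have hrp : s(v, b) ∈ p.edges := hedges ▸ (List.mem_append.2 (Or.inr hrE))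
    rcases hq_mem with h1 | h1 <;> rcases hr_mem with h2 | h2
    · exact absurd (h1.trans h2.symm) hne
    · exact ⟨h1 ▸ hqp, h2 ▸ hrp⟩
    · exact ⟨h2 ▸ hrp, h1 ▸ hqp⟩
    · exact absurd (h1.trans h2.symm) hne
  have key : ∀ p : G.Walk m1 m2, p.IsPath → (e1 ∈ p.edges ↔ e2 ∈ p.edges) := by
    intro p hp
    constructor
    · intro h1
      induction e1 using Sym2.inductionOn with
      | hf x y =>
        have hsup : v ∈ p.support := by
          rcases Sym2.mem_iff.1 hve1 with rfl | rfl
          · exact p.fst_mem_support_of_mem_edges h1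
          · exact p.snd_mem_support_of_mem_edges h1
        exact (both p hp hsup).2
    · intro h2
      induction e2 using Sym2.inductionOn with
      | hf x y =>
        have hsup : v ∈ p.support := by
          rcases Sym2.mem_iff.1 hve2 with rfl | rfl
          · exact p.fst_mem_support_of_mem_edges h2
          · exact p.snd_mem_support_of_mem_edges h2
        exact (both p hp hsup).1
  refine ⟨fun _ => 1, fun e => if e = e1 then 1/2 else if e = e2 then 3/2 else 1,
    fun e _ => one_pos, fun e _ => by dsimp only; split_ifs <;> norm_num, ?_, ?_⟩
  · intro p hp
    set w2 : Sym2 V → ℝ := fun e => if e = e1 then 1/2 else if e = e2 then 3/2 else 1 with hw2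
    have hnd : p.edges.Nodup := hp.isTrail.edges_nodup
    have hsub : ∀ l : List (Sym2 V),
        (l.map w2).sum - (l.map fun _ => (1:ℝ)).sum = (l.map fun e => w2 e - 1).sum := by
      intro l
      induction l with
      | nil => simp
      | cons a t ih => simp only [List.map_cons, List.sum_cons]; rw [← ih]; ring
    have hzero : (p.edges.map fun e => w2 e - 1).sum = 0 := by
      by_cases h1 : e1 ∈ p.edges
      · have h2 : e2 ∈ p.edges := (key p hp).1 h1
        rw [← List.sum_toFinset _ hnd]
        have hss : ({e1, e2} : Finset (Sym2 V)) ⊆ p.edges.toFinset := by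
          intro x hx
          simp only [Finset.mem_insert, Finset.mem_singleton] at hx
          rcases hx with rfl | rfl <;> simp [h1, h2]
        rw [← Finset.sum_subset hss (by
          intro x hx hnx
          simp only [Finset.mem_insert, Finset.mem_singleton, not_or] at hnx
          simp [hw2, hnx.1, hnx.2])]
        rw [Finset.sum_pair he]
        simp [hw2, he, he.symm]
        norm_num
      · have h2 : e2 ∉ p.edges := fun h => h1 ((key p hp).2 h)
        apply List.sum_eq_zero
        intro x hx
        simp only [List.mem_map] at hx
        obtain ⟨a, ha, rfl⟩ := hx
        have hne1 : a ≠ e1 := fun h => h1 (h ▸ ha)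
        have hne2 : a ≠ e2 := fun h => h2 (h ▸ ha)
        simp [hw2, hne1, hne2]
    have := hsub p.edges
    rw [hzero] at this
    linarith [this]
  · simp only [if_pos rfl]
    norm_num
end
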